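/- Let Z ∈ ℝ^{n_1×⋯×n_d} be a nonzero tensor of order d and set r̃_k = rank(Z^{<k>}) for k ∈ {1,…,d−1}. Then there exists a tensor train decomposition U_1,…,U_d of Z of size exactly (r̃_1,…,r̃_{d−1}). -/

import Mathlib

open Matrix Kronecker

namespace TT

/-- The cores of a tensor train decomposition (0-based indexing: Lean core `k`
is the paper's core `U_{k+1}`): core `k` assigns to each `i ∈ Fin (n k)` a real
`r k × r (k+1)` matrix. -/
abbrev Cores (n r : ℕ → ℕ) : Type :=
  (k : ℕ) → Fin (n k) → Matrix (Fin (r k)) (Fin (r (k+1))) ℝ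

/-- Left flattening `U_k^L`: entry `U_k(i)_{α,β}` at row `(i, α)`, column `β`. -/
def UL (n r : ℕ → ℕ) (U : Cores n r) (k : ℕ) :
    Matrix (Fin (n k) × Fin (r k)) (Fin (r (k+1))) ℝ :=
  Matrix.of fun q β => U k q.1 q.2 β

/-- Right flattening `U_k^R`: entry `U_k(i)_{α,β}` at row `α`, column pair `(β, i)`. -/
def UR (n r : ℕ → ℕ) (U : Cores n r) (k : ℕ) :
    Matrix (Fin (r k)) (Fin (r (k+1)) × Fin (n k)) ℝ :=
  Matrix.of fun α q => U k q.2 α q.1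

/-- The (1 × r k) matrix product `U_1(i_1) ⋯ U_k(i_k)` (starting from the all-ones
row of length `r 0`; with `r 0 = 1` this is the paper's product). -/
def prodRowOf (n r : ℕ → ℕ) (U : Cores n r) :
    (k : ℕ) → ((j : Fin k) → Fin (n j.val)) → Fin (r k) → ℝ
  | 0, _ => fun _ => 1
  | k + 1, row => fun β =>
      ∑ α : Fin (r k),
        prodRowOf n r U k (fun j => row j.castSucc) α * U k (row ⟨k, Nat.lt_succ_self k⟩) α β

/-- Value of the TT tensor with cores `U` at a multi-index:
`Z(i_1,…,i_d) = U_1(i_1) ⋯ U_d(i_d)` (scalar, given `r 0 = r d = 1`). -/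
def ttValue (n r : ℕ → ℕ) (d : ℕ) (U : Cores n r) (i : (j : Fin d) → Fin (n j.val)) : ℝ :=
  ∑ β : Fin (r d), prodRowOf n r U d i β

/-- The (r k × 1, as a column) matrix product `U_{k+1}(i_{k+1}) ⋯ U_d(i_d)` (0-based cores). -/
def prodColOf (n r : ℕ → ℕ) (d : ℕ) (U : Cores n r) (k : ℕ)
    (row : (j : Fin (d - k)) → Fin (n (k + j.val))) : Fin (r k) → ℝ :=
  if h : k < d then
    fun α =>
      ∑ β : Fin (r (k + 1)),
        U k (row ⟨0, by omega⟩) α β *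
          prodColOf n r d U (k + 1)
            (fun j =>
              Fin.cast (show n (k + (j.val + 1)) = n (k + 1 + j.val) from congrArg n (by omega))
                (row ⟨j.val + 1, by have := j.isLt; omega⟩)) β
  else fun _ => 1
termination_by d - k

/-- `k`-th flattening `Z^{<k>}` of a tensor of order `d`: rows are multi-indices
`(i_1,…,i_k)`, columns are multi-indices `(i_{k+1},…,i_d)`. -/
def flatten (n : ℕ → ℕ) (d : ℕ) (Z : ((j : Fin d) → Fin (n j.val)) → ℝ) (k : ℕ) :
    Matrix ((j : Fin k) → Fin (n j.val)) ((j : Fin (d - k)) → Fin (n (k + j.val))) ℝ :=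
  Matrix.of fun row col =>
    Z fun j =>
      if h : j.val < k then row ⟨j.val, h⟩
      else
        Fin.cast (show n (k + (j.val - k)) = n j.val from congrArg n (by omega))
          (col ⟨j.val - k, by have := j.isLt; omega⟩)

/-- Left interface matrices: `X_{≤0} = 1` and `X_{≤k} = (I_{n_k} ⊗ X_{≤k-1}) U_k^L`,
rows reindexed along the canonical identification of multi-indices. -/
def leftInterface (n r : ℕ → ℕ) (U : Cores n r) :
    (k : ℕ) → Matrix ((j : Fin k) → Fin (n j.val)) (Fin (r k)) ℝ
  | 0 => Matrix.of fun _ _ => 1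
  | k + 1 =>
      (((1 : Matrix (Fin (n k)) (Fin (n k)) ℝ) ⊗ₖ leftInterface n r U k) * UL n r U k).submatrix
        (fun row => (row ⟨k, Nat.lt_succ_self k⟩, fun j => row j.castSucc)) id

/-- Right interface matrices (0-based: Lean `rightInterface n r d U k` is the paper's
`X_{≥k+1}`): `X_{≥d+1} = 1` and `X_{≥k}ᵀ = U_k^R (X_{≥k+1}ᵀ ⊗ I_{n_k})`,
rows reindexed along the canonical identification of multi-indices. -/
def rightInterface (n r : ℕ → ℕ) (d : ℕ) (U : Cores n r) (k : ℕ) :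
    Matrix ((j : Fin (d - k)) → Fin (n (k + j.val))) (Fin (r k)) ℝ :=
  if h : k < d then
    ((UR n r U k *
          ((rightInterface n r d U (k + 1))ᵀ ⊗ₖ (1 : Matrix (Fin (n k)) (Fin (n k)) ℝ)))ᵀ).submatrix
      (fun row =>
        (fun j =>
            Fin.cast (show n (k + (j.val + 1)) = n (k + 1 + j.val) from congrArg n (by omega))
              (row ⟨j.val + 1, by have := j.isLt; omega⟩),
          row ⟨0, by omega⟩))
      id
  else Matrix.of fun _ _ => 1
termination_by d - k

/-- Left variational interface matrices: `V_{≤0} = 0` and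
`V_{≤k} = (I_{n_k} ⊗ V_{≤k-1}) U_k^L + (I_{n_k} ⊗ X_{≤k-1}) δV_k^L`. -/
def leftVariational (n r : ℕ → ℕ) (U δV : Cores n r) :
    (k : ℕ) → Matrix ((j : Fin k) → Fin (n j.val)) (Fin (r k)) ℝ
  | 0 => 0
  | k + 1 =>
      ((((1 : Matrix (Fin (n k)) (Fin (n k)) ℝ) ⊗ₖ leftVariational n r U δV k) * UL n r U k) +
          (((1 : Matrix (Fin (n k)) (Fin (n k)) ℝ) ⊗ₖ leftInterface n r U k) * UL n r δV k)).submatrix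
        (fun row => (row ⟨k, Nat.lt_succ_self k⟩, fun j => row j.castSucc)) id

/-- Right variational interface matrices (Lean `k` ↦ paper `V_{≥k+1}`): `V_{≥d+1} = 0` and
`V_{≥k}ᵀ = U_k^R (V_{≥k+1}ᵀ ⊗ I_{n_k}) + δV_k^R (X_{≥k+1}ᵀ ⊗ I_{n_k})`. -/
def rightVariational (n r : ℕ → ℕ) (d : ℕ) (U δV : Cores n r) (k : ℕ) :
    Matrix ((j : Fin (d - k)) → Fin (n (k + j.val))) (Fin (r k)) ℝ :=
  if h : k < d then
    ((UR n r U k *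
            ((rightVariational n r d U δV (k + 1))ᵀ ⊗ₖ (1 : Matrix (Fin (n k)) (Fin (n k)) ℝ)) +
          UR n r δV k *
            ((rightInterface n r d U (k + 1))ᵀ ⊗ₖ (1 : Matrix (Fin (n k)) (Fin (n k)) ℝ)))ᵀ).submatrix
      (fun row =>
        (fun j =>
            Fin.cast (show n (k + (j.val + 1)) = n (k + 1 + j.val) from congrArg n (by omega))
              (row ⟨j.val + 1, by have := j.isLt; omega⟩),
          row ⟨0, by omega⟩))
      id
  else 0
termination_by d - k



/-- Merge an index with a column multi-index. -/
def merge (n : ℕ → ℕ) (d k : ℕ) (i : Fin (n k))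
    (c : (j : Fin (d - (k+1))) → Fin (n (k+1+j.val))) :
    (j : Fin (d - k)) → Fin (n (k + j.val)) :=
  fun j =>
    if h : j.val = 0 then Fin.cast (congrArg n (by omega)) i
    else Fin.cast (congrArg n (by omega : k + 1 + (j.val - 1) = k + j.val))
      (c ⟨j.val - 1, by have := j.isLt; omega⟩)

lemma val_congr {m : ℕ} {nn : ℕ → ℕ} (c : (j : Fin m) → Fin (nn j.val))
    {a b : Fin m} (h : a.val = b.val) : (c a).val = (c b).val := by
  rcases a with ⟨a, ha⟩; rcases b with ⟨b, hb⟩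
  simp only at h
  subst h
  rfl

lemma flatten_succ {n : ℕ → ℕ} (d : ℕ) (Z : ((j : Fin d) → Fin (n j.val)) → ℝ) (k : ℕ)
    (row : (j : Fin (k+1)) → Fin (n j.val))
    (c : (j : Fin (d - (k+1))) → Fin (n (k+1+j.val))) :
    flatten n d Z (k+1) row c =
      flatten n d Z k (fun j => row j.castSucc)
        (merge n d k (row ⟨k, Nat.lt_succ_self k⟩) c) := by
  unfold flatten
  simp only [Matrix.of_apply, merge]
  congr 1
  funext j
  by_cases h1 : j.val < k
  · rw [dif_pos (show j.val < k + 1 by omega), dif_pos h1]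
    apply Fin.ext
    exact val_congr row (by simp)
  · by_cases h2 : j.val = k
    · rw [dif_pos (show j.val < k + 1 by omega), dif_neg h1,
        dif_pos (show j.val - k = 0 by omega)]
      apply Fin.ext
      simp only [Fin.coe_cast]
      exact val_congr row (by simp [h2])
    · rw [dif_neg (show ¬ j.val < k + 1 by omega), dif_neg h1,
        dif_neg (show ¬ j.val - k = 0 by omega)]
      apply Fin.ext
      simp only [Fin.coe_cast]
      exact val_congr (nn := fun v => n (k+1+v)) c
        (by show j.val - (k+1) = j.val - k - 1; omega)

/-- Value of the diagonal entry picture. -/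
lemma flatten_last {n : ℕ → ℕ} (d : ℕ) (Z : ((j : Fin d) → Fin (n j.val)) → ℝ)
    (i : (j : Fin d) → Fin (n j.val)) (c : (j : Fin (d - d)) → Fin (n (d + j.val))) :
    flatten n d Z d i c = Z i := by
  unfold flatten
  simp only [Matrix.of_apply]
  congr 1
  funext j
  rw [dif_pos j.isLt]


lemma exists_rank_fact {m p : Type} [Fintype m] [Fintype p]
    (M : Matrix m p ℝ) (r : ℕ) (hr : M.rank = r) :
    ∃ (A : Matrix m (Fin r) ℝ) (B : Matrix (Fin r) p ℝ) (B' : Matrix p (Fin r) ℝ),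
      M = A * B ∧ B * B' = 1 := by
  classical
  set W : Submodule ℝ (p → ℝ) := Submodule.span ℝ (Set.range (fun i => M i)) with hW
  have hfr : Module.finrank ℝ W = r := by
    have h1 : Mᵀ.rank = Module.finrank ℝ W := by
      rw [Matrix.rank_eq_finrank_span_cols]; rfl
    rw [Matrix.rank_transpose] at h1
    rw [← h1, hr]
  let b : Module.Basis (Fin r) ℝ W := Module.finBasisOfFinrankEq ℝ W hfr
  let f : (Fin r → ℝ) →ₗ[ℝ] (p → ℝ) :=
    { toFun := fun x c => ∑ β, x β * (b β : p → ℝ) c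
      map_add' := by intro x y; funext c; simp [add_mul, Finset.sum_add_distrib]
      map_smul' := by intro a x; funext c; simp [Finset.mul_sum, mul_assoc] }
  have hli : LinearIndependent ℝ (fun β => (b β : p → ℝ)) :=
    b.linearIndependent.map' W.subtype (Submodule.ker_subtype W)
  have hinj : LinearMap.ker f = ⊥ := by
    rw [LinearMap.ker_eq_bot']
    intro x hx
    have h0 : ∑ β, x β • (fun c => (b β : p → ℝ) c) = 0 := by
      funext c
      have := congrFun hx c
      simpa [f] using this
    have := Fintype.linearIndependent_iff.mp hli x h0
    funext β; exact this β
  obtain ⟨g, hg⟩ := LinearMap.exists_leftInverse_of_injective f hinj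
  refine ⟨Matrix.of fun i β => b.repr ⟨M i, Submodule.subset_span ⟨i, rfl⟩⟩ β,
    Matrix.of fun β c => (b β : p → ℝ) c,
    Matrix.of fun c β => g (Pi.single c 1) β, ?_, ?_⟩
  · ext i c
    have := b.sum_repr ⟨M i, Submodule.subset_span ⟨i, rfl⟩⟩
    have h2 := congrArg (fun (w : W) => (w : p → ℝ) c) this
    simp only [Submodule.coe_sum, Submodule.coe_smul, Finset.sum_apply, Pi.smul_apply,
      smul_eq_mul] at h2
    rw [Matrix.mul_apply]
    exact h2.symm
  · ext β₀ β
    rw [Matrix.mul_apply]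
    have hrow : (fun c => (b β₀ : p → ℝ) c) = ∑ c, ((b β₀ : p → ℝ) c) • (Pi.single c 1 : p → ℝ) := by
      funext c'
      simp [Finset.sum_apply, Pi.single_apply]
    have hgb : g (fun c => (b β₀ : p → ℝ) c) = (Pi.single β₀ 1 : Fin r → ℝ) := by
      have hfb : f ((Pi.single β₀ 1 : Fin r → ℝ)) = fun c => (b β₀ : p → ℝ) c := by
        funext c; simp [f, Pi.single_apply]
      rw [← hfb]
      have := congrFun (congrArg (fun (h : _ →ₗ[ℝ] _) => h.toFun) hg) ((Pi.single β₀ 1 : Fin r → ℝ))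
      simpa using this
    calc ∑ c, (b β₀ : p → ℝ) c * g (Pi.single c 1) β
        = g (∑ c, ((b β₀ : p → ℝ) c) • (Pi.single c 1 : p → ℝ)) β := by
          rw [map_sum]
          simp [Finset.sum_apply]
      _ = (Pi.single β₀ 1 : Fin r → ℝ) β := by rw [← hrow, hgb]
      _ = (1 : Matrix (Fin r) (Fin r) ℝ) β₀ β := by
          simp [Matrix.one_apply, Pi.single_apply, eq_comm]

section Main

def coresOf (n rt : ℕ → ℕ) (d : ℕ)
    (B : (k : ℕ) → Matrix (Fin (rt k)) ((j : Fin (d - k)) → Fin (n (k + j.val))) ℝ)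
    (B' : (k : ℕ) → Matrix ((j : Fin (d - k)) → Fin (n (k + j.val))) (Fin (rt k)) ℝ) :
    Cores n rt :=
  fun k i =>
    if h : k + 1 ≤ d then
      Matrix.of fun α β => ∑ c, B k α (merge n d k i c) * B' (k+1) c β
    else 0

lemma prodRowOf_coresOf (n rt : ℕ → ℕ) (d : ℕ)
    (Z : ((j : Fin d) → Fin (n j.val)) → ℝ)
    (A : (k : ℕ) → Matrix ((j : Fin k) → Fin (n j.val)) (Fin (rt k)) ℝ)
    (B : (k : ℕ) → Matrix (Fin (rt k)) ((j : Fin (d - k)) → Fin (n (k + j.val))) ℝ)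
    (B' : (k : ℕ) → Matrix ((j : Fin (d - k)) → Fin (n (k + j.val))) (Fin (rt k)) ℝ)
    (hA0 : ∀ row β, A 0 row β = 1)
    (h1 : ∀ k, k ≤ d → flatten n d Z k = A k * B k)
    (h2 : ∀ k, 1 ≤ k → k ≤ d → B k * B' k = 1) :
    ∀ k, k ≤ d → ∀ row β,
      prodRowOf n rt (coresOf n rt d B B') k row β = A k row β := by
  intro k
  induction k with
  | zero =>
      intro _ row β
      rw [hA0 row β]
      rfl
  | succ k ih =>
      intro hk row β
      have hkd : k ≤ d := by omega
      show (∑ α : Fin (rt k),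
        prodRowOf n rt (coresOf n rt d B B') k (fun j => row j.castSucc) α *
          coresOf n rt d B B' k (row ⟨k, Nat.lt_succ_self k⟩) α β) = A (k+1) row β
      have hU : ∀ α, coresOf n rt d B B' k (row ⟨k, Nat.lt_succ_self k⟩) α β =
          ∑ c, B k α (merge n d k (row ⟨k, Nat.lt_succ_self k⟩) c) * B' (k+1) c β := by
        intro α
        unfold coresOf
        rw [dif_pos hk]
        rfl
      calc (∑ α : Fin (rt k),
            prodRowOf n rt (coresOf n rt d B B') k (fun j => row j.castSucc) α *
              coresOf n rt d B B' k (row ⟨k, Nat.lt_succ_self k⟩) α β)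
          = ∑ α : Fin (rt k), A k (fun j => row j.castSucc) α *
              ∑ c, B k α (merge n d k (row ⟨k, Nat.lt_succ_self k⟩) c) * B' (k+1) c β := by
            refine Finset.sum_congr rfl fun α _ => ?_
            rw [ih hkd, hU]
        _ = ∑ c, (∑ α : Fin (rt k), A k (fun j => row j.castSucc) α *
              B k α (merge n d k (row ⟨k, Nat.lt_succ_self k⟩) c)) * B' (k+1) c β := by
            simp only [Finset.mul_sum, Finset.sum_mul, mul_assoc]
            exact Finset.sum_comm
        _ = ∑ c, flatten n d Z (k+1) row c * B' (k+1) c β := by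
            refine Finset.sum_congr rfl fun c _ => ?_
            rw [flatten_succ, h1 k hkd]
            rfl
        _ = ∑ c, (∑ γ, A (k+1) row γ * B (k+1) γ c) * B' (k+1) c β := by
            refine Finset.sum_congr rfl fun c _ => ?_
            rw [h1 (k+1) hk]
            rfl
        _ = ∑ γ, A (k+1) row γ * ∑ c, B (k+1) γ c * B' (k+1) c β := by
            simp only [Finset.mul_sum, Finset.sum_mul, mul_assoc]
            exact Finset.sum_comm
        _ = A (k+1) row β := by
            have h2' := h2 (k+1) (by omega) hk
            have : ∀ γ, (∑ c, B (k+1) γ c * B' (k+1) c β) = (1 : Matrix _ _ ℝ) γ β := by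
              intro γ
              rw [← Matrix.mul_apply, h2']
            simp only [this, Matrix.one_apply]
            simp

end Main

/-- A nonzero tensor `Z` of order `d ≥ 1` admits a TT decomposition of
size exactly `(r̃ 1, …, r̃ (d-1))`, where `r̃ k` is the rank of the `k`-th flattening
(and `r̃ 0 = r̃ d = 1`). -/
theorem tt_minimal_decomposition_exists (n : ℕ → ℕ) (d : ℕ) (hd : 1 ≤ d)
    (Z : ((j : Fin d) → Fin (n j.val)) → ℝ) (hZ : Z ≠ 0)
    (rt : ℕ → ℕ) (hrt0 : rt 0 = 1) (hrtd : rt d = 1)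
    (hrt : ∀ k, 1 ≤ k → k ≤ d - 1 → rt k = (flatten n d Z k).rank) :
    ∃ U : Cores n rt, ∀ i, Z i = ttValue n rt d U i := by
  classical
  have hfact : ∀ k : ℕ, ∃ (A : Matrix ((j : Fin k) → Fin (n j.val)) (Fin (rt k)) ℝ)
      (B : Matrix (Fin (rt k)) ((j : Fin (d - k)) → Fin (n (k + j.val))) ℝ)
      (B' : Matrix ((j : Fin (d - k)) → Fin (n (k + j.val))) (Fin (rt k)) ℝ),
      (k ≤ d → flatten n d Z k = A * B) ∧
      (1 ≤ k → k ≤ d → B * B' = 1) ∧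
      (k = d → ∀ α c, B α c = 1) ∧
      (k = 0 → ∀ row β, A row β = 1) := by
    intro k
    by_cases hk0 : k = 0
    · subst hk0
      refine ⟨Matrix.of fun _ _ => 1,
        Matrix.of fun _ c => flatten n d Z 0 (fun j => absurd j.isLt (by omega)) c,
        Matrix.of fun _ _ => 0, ?_, ?_, ?_, ?_⟩
      · intro _
        ext row c
        rw [Matrix.mul_apply]
        have hval : flatten n d Z 0 (fun j => absurd j.isLt (by omega)) c =
            flatten n d Z 0 row c := by
          unfold flatten
          simp only [Matrix.of_apply]
          rfl
        simp only [Matrix.of_apply, one_mul]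
        rw [Finset.sum_const, Finset.card_univ, Fintype.card_fin, hrt0, one_nsmul, hval]
      · intro h
        omega
      · intro h
        omega
      · intro _ row β
        rfl
    · by_cases hkd : k = d
      · subst hkd
        refine ⟨Matrix.of fun i _ => Z i, Matrix.of fun _ _ => 1,
          Matrix.of fun _ _ => 1, ?_, ?_, ?_, ?_⟩
        · intro _
          ext i c
          rw [Matrix.mul_apply, flatten_last]
          simp only [Matrix.of_apply, mul_one]
          rw [Finset.sum_const, Finset.card_univ, Fintype.card_fin, hrtd, one_nsmul]
        · intro _ _
          haveI : IsEmpty (Fin (k - k)) := by rw [Nat.sub_self]; infer_instance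
          haveI : Subsingleton (Fin (rt k)) := by rw [hrtd]; infer_instance
          ext α β
          rw [Matrix.mul_apply, Matrix.one_apply, if_pos (Subsingleton.elim α β)]
          simp only [Matrix.of_apply, mul_one]
          rw [Finset.sum_const, Finset.card_univ, Fintype.card_unique, one_nsmul]
        · intro _ α c
          rfl
        · intro h
          exact absurd h hk0
      · by_cases hkd2 : k ≤ d
        · obtain ⟨A, B, B', hAB, hBB⟩ := exists_rank_fact (flatten n d Z k) (rt k)
            ((hrt k (by omega) (by omega)).symm)
          exact ⟨A, B, B', fun _ => hAB, fun _ _ => hBB, fun h => absurd h hkd,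
            fun h => absurd h hk0⟩
        · exact ⟨Matrix.of fun _ _ => 0, Matrix.of fun _ _ => 1, Matrix.of fun _ _ => 0,
            fun h => absurd h hkd2, fun _ h => absurd h hkd2, fun _ _ _ => rfl,
            fun h => absurd h hk0⟩
  choose A B B' hAB hBB hBd hA0 using hfact
  refine ⟨coresOf n rt d B B', fun i => ?_⟩
  have hQ := prodRowOf_coresOf n rt d Z A B B' (hA0 0 rfl) hAB hBB d le_rfl
  show Z i = ∑ β : Fin (rt d), prodRowOf n rt (coresOf n rt d B B') d i β
  have hc : (j : Fin (d - d)) → Fin (n (d + j.val)) := fun j => absurd j.isLt (by omega)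
  calc Z i = flatten n d Z d i hc := (flatten_last d Z i hc).symm
    _ = ∑ β, A d i β * B d β hc := by rw [hAB d le_rfl]; rfl
    _ = ∑ β, A d i β := by
        refine Finset.sum_congr rfl fun β _ => ?_
        rw [hBd d rfl β hc, mul_one]
    _ = ∑ β : Fin (rt d), prodRowOf n rt (coresOf n rt d B B') d i β := by
        refine Finset.sum_congr rfl fun β _ => ?_
        rw [hQ i β]

end TT
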